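/- Under conditional independence of Y and S given X (on the target support) and positivity, the target-population expected loss satisfies the inverse-odds weighting identity: E[L(Y, g(X)) | S = 0] = (1 / P(S=0)) · E[ 1{S=1} · (P(S=0 | X) / P(S=1 | X)) · L(Y, g(X)) ]. -/

import Mathlib

open MeasureTheory ProbabilityTheory

section Aux

variable {Ω : Type*} [MeasurableSpace Ω] {d : ℕ}

/-- Disintegration of an integral via `condDistrib`. -/
lemma aux_disint (μ : Measure Ω) [IsFiniteMeasure μ]
    (Y : Ω → ℝ) (X : Ω → (Fin d → ℝ)) (hY : Measurable Y) (hX : Measurable X)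
    (f : (Fin d → ℝ) → ℝ → ℝ) (hf : Measurable (Function.uncurry f))
    (hint : Integrable (fun ω => f (X ω) (Y ω)) μ) :
    ∫ ω, f (X ω) (Y ω) ∂μ
      = ∫ x, ∫ y, f x y ∂(condDistrib Y X μ x) ∂(μ.map X) := by
  have hmeas : Measurable (fun ω => (X ω, Y ω)) := hX.prodMk hY
  have hmap : μ.map (fun ω => (X ω, Y ω)) = (μ.map X) ⊗ₘ condDistrib Y X μ := by
    exact (compProd_map_condDistrib hY.aemeasurable).symm
  have hintmap : Integrable (Function.uncurry f) (μ.map (fun ω => (X ω, Y ω))) := by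
    rw [integrable_map_measure hf.aestronglyMeasurable hmeas.aemeasurable]
    exact hint
  calc ∫ ω, f (X ω) (Y ω) ∂μ
      = ∫ p, Function.uncurry f p ∂(μ.map (fun ω => (X ω, Y ω))) :=
        (integral_map hmeas.aemeasurable hf.aestronglyMeasurable).symm
    _ = ∫ p, Function.uncurry f p ∂((μ.map X) ⊗ₘ condDistrib Y X μ) := by rw [hmap]
    _ = ∫ x, ∫ y, f x y ∂(condDistrib Y X μ x) ∂(μ.map X) :=
        Measure.integral_compProd (by rwa [← hmap])

/-- The distribution of `X` under the conditional measure `μ[|{S = b}]` has density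
`condDistrib S X μ · {b}` with respect to `μ.map X`, up to normalization. -/
lemma aux_map_cond (μ : Measure Ω) [IsProbabilityMeasure μ]
    (X : Ω → (Fin d → ℝ)) (S : Ω → Bool) (hX : Measurable X) (hS : Measurable S) (b : Bool) :
    (μ[|{ω | S ω = b}]).map X
      = (μ {ω | S ω = b})⁻¹
          • (μ.map X).withDensity (fun x => condDistrib S X μ x {b}) := by
  have hSb : MeasurableSet {ω | S ω = b} := hS (measurableSet_singleton b)
  ext B hB
  rw [Measure.map_apply hX hB, cond_apply hSb, Measure.smul_apply,
    withDensity_apply _ hB, smul_eq_mul]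
  congr 1
  rw [setLIntegral_map hB (Kernel.measurable_coe _ (measurableSet_singleton b)) hX]
  rw [setLIntegral_preimage_condDistrib hX hS.aemeasurable (measurableSet_singleton b) hB]
  rw [Set.inter_comm]
  rfl

end Aux

/-- Under conditional independence of `Y` and `S` given `X` (on the target support) and
positivity, the target-population expected loss satisfies the inverse-odds weighting
identity:
`E[L(Y, g(X)) | S = 0] = (1 / P(S=0)) · E[ 1{S=1} · (P(S=0|X)/P(S=1|X)) · L(Y, g(X)) ]`. -/
theorem stmt_2 {Ω : Type*} [MeasurableSpace Ω] {d : ℕ}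
    (μ : Measure Ω) [IsProbabilityMeasure μ]
    (Y : Ω → ℝ) (X : Ω → (Fin d → ℝ)) (S : Ω → Bool)
    (g : (Fin d → ℝ) → ℝ) (L : ℝ → ℝ → ℝ)
    (hY : Measurable Y) (hX : Measurable X) (hS : Measurable S)
    (hg : Measurable g) (hL : Measurable (Function.uncurry L))
    (hs1 : μ {ω | S ω = true} ≠ 0) (hs0 : μ {ω | S ω = false} ≠ 0)
    (hLint : Integrable (fun ω => L (Y ω) (g (X ω))) μ)
    (hWint : Integrable (fun ω =>
      if S ω = true then
        ((condDistrib S X μ (X ω) {false}).toReal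
            / (condDistrib S X μ (X ω) {true}).toReal) * L (Y ω) (g (X ω))
      else 0) μ)
    (hpos : ∀ᵐ x ∂((μ[|{ω | S ω = false}]).map X),
      0 < condDistrib S X μ x {true})
    (hcondDist : ∀ᵐ x ∂((μ[|{ω | S ω = false}]).map X),
      condDistrib Y X (μ[|{ω | S ω = true}]) x
        = condDistrib Y X (μ[|{ω | S ω = false}]) x) :
    ∫ ω, L (Y ω) (g (X ω)) ∂(μ[|{ω | S ω = false}])
      = (1 / (μ {ω | S ω = false}).toReal)
          * ∫ ω, (if S ω = true then
              ((condDistrib S X μ (X ω) {false}).toReal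
                  / (condDistrib S X μ (X ω) {true}).toReal) * L (Y ω) (g (X ω))
            else 0) ∂μ := by
  classical
  set A0 : Set Ω := {ω | S ω = false} with hA0def
  set A1 : Set Ω := {ω | S ω = true} with hA1def
  have hA0 : MeasurableSet A0 := hS (measurableSet_singleton false)
  have hA1 : MeasurableSet A1 := hS (measurableSet_singleton true)
  haveI h0 : IsProbabilityMeasure (μ[|A0]) := cond_isProbabilityMeasure hs0
  haveI h1 : IsProbabilityMeasure (μ[|A1]) := cond_isProbabilityMeasure hs1
  set κ := condDistrib S X μ with hκdef
  set ℓ : (Fin d → ℝ) → ℝ → ℝ := fun x y => L y (g x) with hℓdef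
  set w : (Fin d → ℝ) → ℝ := fun x => (κ x {false}).toReal / (κ x {true}).toReal with hwdef
  set ν := μ.map X with hνdef
  set η0 := condDistrib Y X (μ[|A0]) with hη0def
  set η1 := condDistrib Y X (μ[|A1]) with hη1def
  set G0 : (Fin d → ℝ) → ℝ := fun x => ∫ y, ℓ x y ∂(η0 x) with hG0def
  set G1 : (Fin d → ℝ) → ℝ := fun x => ∫ y, ℓ x y ∂(η1 x) with hG1def
  have hℓm : Measurable (Function.uncurry ℓ) := by
    have : Function.uncurry ℓ = (Function.uncurry L) ∘ (fun p => (p.2, g p.1)) := rfl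
    rw [this]; exact hL.comp (measurable_snd.prodMk (hg.comp measurable_fst))
  have hκF : Measurable (fun x => κ x {false}) :=
    Kernel.measurable_coe _ (measurableSet_singleton false)
  have hκT : Measurable (fun x => κ x {true}) :=
    Kernel.measurable_coe _ (measurableSet_singleton true)
  have hwm : Measurable w := hκF.ennreal_toReal.div hκT.ennreal_toReal
  have ha0ne : (μ A0).toReal ≠ 0 := ENNReal.toReal_ne_zero.mpr ⟨hs0, measure_ne_top _ _⟩
  have ha1ne : (μ A1).toReal ≠ 0 := ENNReal.toReal_ne_zero.mpr ⟨hs1, measure_ne_top _ _⟩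
  -- density facts
  have hν0 : (μ[|A0]).map X = (μ A0)⁻¹ • ν.withDensity (fun x => κ x {false}) :=
    aux_map_cond μ X S hX hS false
  have hν1 : (μ[|A1]).map X = (μ A1)⁻¹ • ν.withDensity (fun x => κ x {true}) :=
    aux_map_cond μ X S hX hS true
  have hcoe : ∀ b : Bool, (ν.withDensity fun x => κ x {b})
      = ν.withDensity (fun x => ((κ x {b}).toNNReal : ENNReal)) := fun b =>
    withDensity_congr_ae (Filter.Eventually.of_forall fun x =>
      (ENNReal.coe_toNNReal (measure_ne_top _ _)).symm)
  -- Step A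
  have hint0 : Integrable (fun ω => ℓ (X ω) (Y ω)) (μ[|A0]) := by
    show Integrable _ ((μ A0)⁻¹ • μ.restrict A0)
    exact (hLint.restrict).smul_measure (ENNReal.inv_ne_top.mpr hs0)
  have stepA : ∫ ω, ℓ (X ω) (Y ω) ∂(μ[|A0]) = ∫ x, G0 x ∂((μ[|A0]).map X) :=
    aux_disint (μ[|A0]) Y X hY hX ℓ hℓm hint0
  -- Step B
  have hif : (fun ω => if S ω = true then w (X ω) * ℓ (X ω) (Y ω) else 0)
      = A1.indicator (fun ω => w (X ω) * ℓ (X ω) (Y ω)) := by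
    funext ω; by_cases h : S ω = true <;> simp [Set.indicator, hA1def, h]
  have hBint : Integrable (fun ω => w (X ω) * ℓ (X ω) (Y ω)) (μ[|A1]) := by
    refine Integrable.smul_measure ?_ (ENNReal.inv_ne_top.mpr hs1)
    refine (hWint.restrict (s := A1)).congr ?_
    refine (ae_restrict_iff' hA1).mpr (Filter.Eventually.of_forall fun ω hω => ?_)
    have : S ω = true := hω
    simp [this]; rfl
  have stepB : ∫ ω, (if S ω = true then w (X ω) * ℓ (X ω) (Y ω) else 0) ∂μ
      = (μ A1).toReal * ∫ ω, w (X ω) * ℓ (X ω) (Y ω) ∂(μ[|A1]) := by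
    rw [hif, integral_indicator hA1]
    show _ = (μ A1).toReal * ∫ ω, _ ∂((μ A1)⁻¹ • μ.restrict A1)
    rw [integral_smul_measure, ENNReal.toReal_inv, smul_eq_mul, ← mul_assoc,
      mul_inv_cancel₀ ha1ne, one_mul]
  -- Step C
  have stepC : ∫ ω, w (X ω) * ℓ (X ω) (Y ω) ∂(μ[|A1])
      = ∫ x, w x * G1 x ∂((μ[|A1]).map X) := by
    have h := aux_disint (μ[|A1]) Y X hY hX (fun x y => w x * ℓ x y)
      ((hwm.comp measurable_fst).mul hℓm) hBint
    rw [h]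
    exact integral_congr_ae (Filter.Eventually.of_forall fun x => integral_const_mul _ _)
  -- a.e. facts on ν
  have haeT : ∀ᵐ x ∂ν, κ x {false} ≠ 0 → 0 < κ x {true} := by
    have h1 : ∀ᵐ x ∂(ν.withDensity fun x => κ x {false}), 0 < κ x {true} := by
      have h2 := hpos
      rw [hν0] at h2
      exact (Measure.ae_ennreal_smul_measure_iff (ENNReal.inv_ne_zero.mpr (measure_ne_top _ _))).mp h2
    exact (ae_withDensity_iff hκF).mp h1
  have haeF : ∀ᵐ x ∂ν, κ x {false} ≠ 0 → η1 x = η0 x := by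
    have h1 : ∀ᵐ x ∂(ν.withDensity fun x => κ x {false}), η1 x = η0 x := by
      have h2 := hcondDist
      rw [hν0] at h2
      exact (Measure.ae_ennreal_smul_measure_iff (ENNReal.inv_ne_zero.mpr (measure_ne_top _ _))).mp h2
    exact (ae_withDensity_iff hκF).mp h1
  -- Step D
  have stepD : ∫ x, w x * G1 x ∂((μ[|A1]).map X)
      = (μ A1)⁻¹.toReal * ((μ A0).toReal * ∫ x, G0 x ∂((μ[|A0]).map X)) := by
    rw [hν1, integral_smul_measure, smul_eq_mul, hcoe true,
      integral_withDensity_eq_integral_smul hκT.ennreal_toNNReal]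
    congr 1
    have key : ∫ x, (κ x {true}).toNNReal • (w x * G1 x) ∂ν
        = ∫ x, (κ x {false}).toNNReal • G0 x ∂ν := by
      refine integral_congr_ae ?_
      filter_upwards [haeT, haeF] with x h1 h2
      by_cases hf0 : κ x {false} = 0
      · simp [hwdef, hf0]
      · have hposT := h1 hf0
        have hη : η1 x = η0 x := h2 hf0
        have htne : (κ x {true}).toReal ≠ 0 :=
          ENNReal.toReal_ne_zero.mpr ⟨ne_of_gt hposT, measure_ne_top _ _⟩
        have hG : G1 x = G0 x := by
          show (∫ y, ℓ x y ∂η1 x) = ∫ y, ℓ x y ∂η0 x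
          rw [hη]
        rw [← hG]
        show (κ x {true}).toReal * (w x * G1 x) = (κ x {false}).toReal * G1 x
        rw [hwdef]
        field_simp
      
    rw [key, ← integral_withDensity_eq_integral_smul hκF.ennreal_toNNReal, ← hcoe false,
      hν0, integral_smul_measure, ENNReal.toReal_inv, smul_eq_mul, ← mul_assoc,
      mul_inv_cancel₀ ha0ne, one_mul]
  -- assemble
  show ∫ ω, ℓ (X ω) (Y ω) ∂(μ[|A0])
      = (1 / (μ A0).toReal) * ∫ ω, (if S ω = true then w (X ω) * ℓ (X ω) (Y ω) else 0) ∂μ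
  rw [stepB, stepC, stepD, stepA, ENNReal.toReal_inv]
  field_simp
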